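/- Let T be a triangulated category with a bounded t-structure, G an object of T, and d a positive integer. Suppose P is a collection of objects of T such that for each object E of T and each integer a, there is a morphism P → E with P ∈ P inducing isomorphisms on H^n for all n ≥ a. Then T = ⟨G⟩_d if and only if every object of P belongs to ⟨G⟩_d. -/

import Mathlib

/-!
Common preamble: generation in triangulated categories, truncation triangles for
t-structures, "isomorphism in degrees ≥ a", levels `⟨G⟩_n`, `coprod_n`,
and Rouquier dimension.
-/

open CategoryTheory Limits Pretriangulated Triangulated

namespace RouquierApprox

variable {C : Type*} [Category C] [Preadditive C] [HasZeroObject C] [HasShift C ℤ]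
  [∀ (n : ℤ), (shiftFunctor C n).Additive] [Pretriangulated C]

/-- A t-structure is non-degenerate if `⋂ₙ T^{≥n} = 0 = ⋂ₙ T^{≤-n}`. -/
def IsNonDegenerate (t : TStructure C) : Prop :=
  (∀ X : C, (∀ n : ℤ, t.ge n X) → IsZero X) ∧ (∀ X : C, (∀ n : ℤ, t.le n X) → IsZero X)

/-- A t-structure is bounded if every object is bounded. -/
def IsBoundedTStructure (t : TStructure C) : Prop :=
  ∀ X : C, ∃ n : ℤ, 0 < n ∧ t.le n X ∧ t.ge (-n) X

/-- A choice of truncation triangle `τ_{≤ a-1} A ⟶ A ⟶ τ_{≥ a} A ⟶ (τ_{≤ a-1} A)[1]`. -/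
structure TruncGETriangle (t : TStructure C) (a : ℤ) (A : C) where
  left : C
  right : C
  left_le : t.le (a - 1) left
  right_ge : t.ge a right
  ι : left ⟶ A
  π : A ⟶ right
  δ : right ⟶ left⟦(1 : ℤ)⟧
  dist : Triangle.mk ι π δ ∈ distTriang C

/-- `f : A ⟶ B` induces isomorphisms on the cohomology objects `H^n` (with respect to
the t-structure `t`) for all `n ≥ a`; for a non-degenerate t-structure this is
equivalently expressed by saying that any morphism induced by `f` between the
truncations `τ_{≥ a} A ⟶ τ_{≥ a} B` is an isomorphism. -/
def IsIsoInDegreesGE (t : TStructure C) (a : ℤ) {A B : C} (f : A ⟶ B) : Prop :=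
  ∀ (TA : TruncGETriangle t a A) (TB : TruncGETriangle t a B) (g : TA.right ⟶ TB.right),
    TA.π ≫ g = f ≫ TB.π → IsIso g

/-- `P` is a retract (direct summand) of `F`. -/
def IsRetract (P F : C) : Prop := ∃ (i : P ⟶ F) (r : F ⟶ P), i ≫ r = 𝟙 P

/-- Finite coproducts of shifts of objects of `S`. -/
def finCoprodShifts (S : Set C) : Set C :=
  {X | ∃ (k : ℕ) (obj : Fin k → C) (s : Fin k → ℤ),
    (∀ i, obj i ∈ S) ∧ Nonempty (X ≅ ⨁ (fun i => (obj i)⟦s i⟧))}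

/-- `add S`: retracts of finite coproducts of shifts of objects of `S`, i.e. the
closure of `S` under shifts, finite coproducts and retracts. -/
def addSet (S : Set C) : Set C := {X | ∃ F ∈ finCoprodShifts S, IsRetract X F}

/-- Cones of morphisms from an object of `S` to an object of `T`. -/
def coneSet (S T : Set C) : Set C :=
  {Z | ∃ (A B : C) (f : A ⟶ B) (g : B ⟶ Z) (h : Z ⟶ A⟦(1 : ℤ)⟧),
    A ∈ S ∧ B ∈ T ∧ Triangle.mk f g h ∈ distTriang C}

/-- The level filtration `⟨G⟩_n`: `⟨G⟩_0` consists of zero objects, `⟨G⟩_1 = add G`,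
and `⟨G⟩_n = add (cones of maps from ⟨G⟩_{n-1} to ⟨G⟩_1)`. -/
def levelSet (G : C) : ℕ → Set C
  | 0 => {X | IsZero X}
  | 1 => addSet {G}
  | (n+2) => addSet (coneSet (levelSet G (n+1)) (addSet {G}))

/-- `coprod_n (G(-∞,∞))`: as `levelSet` but without retracts. -/
def coprodLevel (G : C) : ℕ → Set C
  | 0 => {X | IsZero X}
  | 1 => finCoprodShifts {G}
  | (n+2) => coneSet (coprodLevel G (n+1)) (finCoprodShifts {G})

/-- The level of `E` with respect to `G`: the minimal `n` with `E ∈ ⟨G⟩_n`. -/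
noncomputable def levelOf (G E : C) : ℕ∞ :=
  sInf {n : ℕ∞ | ∃ k : ℕ, n = k ∧ E ∈ levelSet G k}

/-- The Rouquier dimension of a (strictly full triangulated) subcategory `S` of `C`,
with levels computed in the ambient category: the least `d` such that
`S ⊆ ⟨G⟩_{d+1}` for some `G ∈ S`. -/
noncomputable def relRouquierDim (S : Set C) : ℕ∞ :=
  sInf {d : ℕ∞ | ∃ (k : ℕ) (G : C), G ∈ S ∧ d = k ∧ S ⊆ levelSet G (k + 1)}

/-- `G` is a strong generator of the (strictly full triangulated) subcategory `S`. -/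
def IsStrongGeneratorOf (S : Set C) (G : C) : Prop :=
  G ∈ S ∧ ∃ n : ℕ, S ⊆ levelSet G n

/-- A morphism `ψ : K ⟶ L` is `G`-ghost if every composition `G⟦n⟧ ⟶ K ⟶ L` vanishes. -/
def IsGhost (G : C) {K L : C} (ψ : K ⟶ L) : Prop :=
  ∀ (n : ℤ) (φ : G⟦n⟧ ⟶ K), φ ≫ ψ = 0

end RouquierApprox
namespace RouquierApprox
section Aux
variable {C : Type*} [Category C] [Preadditive C] [HasZeroObject C] [HasShift C ℤ]
  [∀ (n : ℤ), (shiftFunctor C n).Additive] [Pretriangulated C]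
variable (t : TStructure C)

lemma tzero {X Y : C} (f : X ⟶ Y) (n : ℤ) (hX : t.le n X) (hY : t.ge (n+1) Y) : f = 0 := by
  have h := t.zero' ((shiftFunctor C n).map f)
    (t.le_shift n n 0 (by omega) X hX) (t.ge_shift (n+1) n 1 (by omega) Y hY)
  apply (shiftFunctor C n).map_injective
  rw [h, Functor.map_zero]

lemma tzero' {X Y : C} (f : X ⟶ Y) (a b : ℤ) (h : a < b) (hX : t.le a X) (hY : t.ge b Y) :
    f = 0 :=
  tzero t f a hX (t.ge_antitone (by omega) _ hY)

lemma le_orth {X : C} (n : ℤ)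
    (h : ∀ Z : C, t.ge (n+1) Z → ∀ f : X ⟶ Z, f = 0) : t.le n X := by
  obtain ⟨A, Y, hA, hY, f, g, hh, mem⟩ := t.exists_triangle X n (n+1) rfl
  obtain ⟨s, hs⟩ := Triangle.yoneda_exact₃ _ mem (𝟙 Y)
    (by change g ≫ 𝟙 Y = 0; rw [h Y hY g, zero_comp])
  have hs0 : s = 0 := tzero' t s (n-1) (n+1) (by omega)
    (t.le_shift n 1 (n-1) (by omega) A hA) hY
  have hYz : IsZero Y := by
    rw [IsZero.iff_id_eq_zero, hs, hs0, comp_zero]; rfl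
  have : IsIso f := (Triangle.isZero₃_iff_isIso₁ _ mem).1 hYz
  exact (t.le n).prop_of_iso (asIso f) hA

lemma ge_orth {X : C} (n : ℤ)
    (h : ∀ Z : C, t.le (n-1) Z → ∀ f : Z ⟶ X, f = 0) : t.ge n X := by
  obtain ⟨A, Y, hA, hY, f, g, hh, mem⟩ := t.exists_triangle X (n-1) n (by omega)
  have hf : f = 0 := h A hA f
  obtain ⟨s, hs⟩ := Triangle.coyoneda_exact₁ _ mem (𝟙 (A⟦(1:ℤ)⟧))
    (by change 𝟙 (A⟦(1:ℤ)⟧) ≫ f⟦(1:ℤ)⟧' = 0; rw [hf, Functor.map_zero, comp_zero])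
  have hs0 : s = 0 := tzero' t s (n-2) n (by omega)
    (t.le_shift (n-1) 1 (n-2) (by omega) A hA) hY
  have hAz : IsZero (A⟦(1:ℤ)⟧) := by
    rw [IsZero.iff_id_eq_zero, hs, hs0, zero_comp]; rfl
  have hA0 : IsZero A := by
    have := (shiftFunctor C (-1:ℤ)).map_isZero hAz
    exact this.of_iso ((shiftEquiv C (1:ℤ)).unitIso.app A)
  have : IsIso g := (Triangle.isZero₁_iff_isIso₂ _ mem).1 hA0
  exact (t.ge n).prop_of_iso (asIso g).symm hY

lemma isZero_le (n : ℤ) {X : C} (h : IsZero X) : t.le n X :=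
  le_orth t n (fun Z _ f => h.eq_of_src f 0)

lemma isZero_ge (n : ℤ) {X : C} (h : IsZero X) : t.ge n X :=
  ge_orth t n (fun Z _ f => h.eq_of_tgt f 0)

lemma le₂ (T : Triangle C) (hT : T ∈ distTriang C) (n : ℤ)
    (h₁ : t.le n T.obj₁) (h₃ : t.le n T.obj₃) : t.le n T.obj₂ := by
  refine le_orth t n (fun Z hZ f => ?_)
  obtain ⟨g, hg⟩ := Triangle.yoneda_exact₂ T hT f (tzero t _ n h₁ hZ)
  rw [hg, tzero t g n h₃ hZ, comp_zero]

lemma ge₂ (T : Triangle C) (hT : T ∈ distTriang C) (n : ℤ)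
    (h₁ : t.ge n T.obj₁) (h₃ : t.ge n T.obj₃) : t.ge n T.obj₂ := by
  refine ge_orth t n (fun Z hZ f => ?_)
  obtain ⟨g, hg⟩ := Triangle.coyoneda_exact₂ T hT f (tzero' t _ (n-1) n (by omega) hZ h₃)
  rw [hg, tzero' t g (n-1) n (by omega) hZ h₁, zero_comp]

lemma le_retract {X Y : C} (h : IsRetract X Y) (n : ℤ) (hY : t.le n Y) : t.le n X := by
  obtain ⟨i, r, hir⟩ := h
  refine le_orth t n (fun Z hZ f => ?_)
  have : r ≫ f = 0 := tzero t _ n hY hZ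
  rw [← Category.id_comp f, ← hir, Category.assoc, this, comp_zero]

lemma ge_retract {X Y : C} (h : IsRetract X Y) (n : ℤ) (hY : t.ge n Y) : t.ge n X := by
  obtain ⟨i, r, hir⟩ := h
  refine ge_orth t n (fun Z hZ f => ?_)
  have : f ≫ i = 0 := tzero' t _ (n-1) n (by omega) hZ hY
  rw [← Category.comp_id f, ← hir, ← Category.assoc, this, zero_comp]

lemma le_biprod {X Y : C} (n : ℤ) (hX : t.le n X) (hY : t.le n Y) : t.le n (X ⊞ Y) :=
  le₂ t _ (binaryBiproductTriangle_distinguished X Y) n hX hY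

lemma ge_biprod {X Y : C} (n : ℤ) (hX : t.ge n X) (hY : t.ge n Y) : t.ge n (X ⊞ Y) :=
  ge₂ t _ (binaryBiproductTriangle_distinguished X Y) n hX hY

end Aux
end RouquierApprox
namespace RouquierApprox
section Aux2
variable {C : Type*} [Category C] [Preadditive C] [HasZeroObject C] [HasShift C ℤ]
  [∀ (n : ℤ), (shiftFunctor C n).Additive] [Pretriangulated C]

noncomputable def biprodFinSuccIso {k : ℕ} (f : Fin (k+1) → C) :
    (⨁ f) ≅ f 0 ⊞ (⨁ fun i : Fin k => f i.succ) where
  hom := biprod.lift (biproduct.π f 0) (biproduct.lift fun i => biproduct.π f i.succ)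
  inv := biprod.desc (biproduct.ι f 0) (biproduct.desc fun i => biproduct.ι f i.succ)
  hom_inv_id := by
    rw [biprod.lift_desc, biproduct.lift_desc, ← biproduct.total, Fin.sum_univ_succ]
  inv_hom_id := by
    ext <;>
      simp [biproduct.ι_π, Fin.succ_ne_zero, (Fin.succ_ne_zero _).symm,
        Fin.succ_inj, Fin.ext_iff]

lemma isZero_biprod_finZero (f : Fin 0 → C) : IsZero (⨁ f) := by
  rw [IsZero.iff_id_eq_zero]
  apply biproduct.hom_ext
  exact fun j => j.elim0

noncomputable def biprodZeroRight {X Z : C} (hZ : IsZero Z) : X ⊞ Z ≅ X where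
  hom := biprod.fst
  inv := biprod.lift (𝟙 X) 0
  hom_inv_id := by
    refine biprod.hom_ext _ _ ?_ ?_
    · simp
    · exact hZ.eq_of_tgt _ _
  inv_hom_id := by simp

noncomputable def biprodZeroLeft {X Z : C} (hZ : IsZero Z) : Z ⊞ X ≅ X :=
  (biprod.braiding Z X).trans (biprodZeroRight hZ)

lemma retract_self (X : C) : IsRetract X X := ⟨𝟙 X, 𝟙 X, by simp⟩

lemma retract_of_iso {X Y : C} (e : X ≅ Y) : IsRetract X Y := ⟨e.hom, e.inv, e.hom_inv_id⟩

lemma retract_trans {X Y Z : C} (h₁ : IsRetract X Y) (h₂ : IsRetract Y Z) : IsRetract X Z := by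
  obtain ⟨i, r, hir⟩ := h₁
  obtain ⟨i', r', hir'⟩ := h₂
  exact ⟨i ≫ i', r' ≫ r, by rw [Category.assoc, ← Category.assoc i', hir',
    Category.id_comp, hir]⟩

lemma retract_shift {X Y : C} (h : IsRetract X Y) (n : ℤ) : IsRetract (X⟦n⟧) (Y⟦n⟧) := by
  obtain ⟨i, r, hir⟩ := h
  exact ⟨i⟦n⟧', r⟦n⟧', by rw [← Functor.map_comp, hir]; exact CategoryTheory.Functor.map_id _ _⟩

lemma retract_biprod {X Y X' Y' : C} (h : IsRetract X Y) (h' : IsRetract X' Y') :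
    IsRetract (X ⊞ X') (Y ⊞ Y') := by
  obtain ⟨i, r, hir⟩ := h
  obtain ⟨i', r', hir'⟩ := h'
  refine ⟨biprod.map i i', biprod.map r r', ?_⟩
  ext <;> simp [hir, hir']

variable {S : Set C}

lemma fin_iso {X Y : C} (h : X ∈ finCoprodShifts S) (e : Y ≅ X) : Y ∈ finCoprodShifts S := by
  obtain ⟨k, obj, s, hobj, ⟨e'⟩⟩ := h
  exact ⟨k, obj, s, hobj, ⟨e.trans e'⟩⟩

lemma fin_zero {X : C} (h : IsZero X) : X ∈ finCoprodShifts S :=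
  ⟨0, Fin.elim0, Fin.elim0, fun i => i.elim0, ⟨h.iso (isZero_biprod_finZero _)⟩⟩

lemma fin_single {A : C} (hA : A ∈ S) (n : ℤ) : A⟦n⟧ ∈ finCoprodShifts S := by
  refine ⟨1, fun _ => A, fun _ => n, fun _ => hA, ⟨?_⟩⟩
  exact ((biprodFinSuccIso (fun _ : Fin 1 => A⟦n⟧)).trans
    (biprodZeroRight (isZero_biprod_finZero _))).symm

lemma fin_self {A : C} (hA : A ∈ S) : A ∈ finCoprodShifts S :=
  fin_iso (fin_single hA 0) ((shiftFunctorZero C ℤ).app A).symm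

lemma fin_cons {A : C} (hA : A ∈ S) {X : C} (h : X ∈ finCoprodShifts S) (n : ℤ) :
    (A⟦n⟧ ⊞ X) ∈ finCoprodShifts S := by
  obtain ⟨k, obj, s, hobj, ⟨e⟩⟩ := h
  let obj' : Fin (k+1) → C := Fin.cons A obj
  let s' : Fin (k+1) → ℤ := Fin.cons n s
  refine ⟨k+1, obj', s', ?_, ⟨?_⟩⟩
  · intro i
    refine Fin.cases ?_ ?_ i
    · simpa [obj'] using hA
    · intro j; simpa [obj'] using hobj j
  · have h0 : (obj' 0)⟦s' 0⟧ = A⟦n⟧ := by simp [obj', s']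
    have hsucc : (fun i : Fin k => (obj' i.succ)⟦s' i.succ⟧) =
        (fun i : Fin k => (obj i)⟦s i⟧) := by
      funext i; simp [obj', s']
    refine Iso.trans ?_ (biprodFinSuccIso fun i => (obj' i)⟦s' i⟧).symm
    exact biprod.mapIso (eqToIso h0.symm) (e.trans (eqToIso (by rw [hsucc])).symm)

lemma fin_biprod_aux (Y : C) (hY : Y ∈ finCoprodShifts S) :
    ∀ (k : ℕ) (obj : Fin k → C) (s : Fin k → ℤ), (∀ i, obj i ∈ S) →
      ((⨁ fun i => (obj i)⟦s i⟧) ⊞ Y) ∈ finCoprodShifts S := by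
  intro k
  induction k with
  | zero =>
    intro obj s hobj
    exact fin_iso hY (biprodZeroLeft (isZero_biprod_finZero _))
  | succ k ih =>
    intro obj s hobj
    have h1 := ih (fun i => obj i.succ) (fun i => s i.succ) (fun i => hobj i.succ)
    have h2 := fin_cons (hobj 0) h1 (s 0)
    refine fin_iso h2 ?_
    exact (biprod.mapIso (biprodFinSuccIso fun i => (obj i)⟦s i⟧) (Iso.refl Y)).trans
      (biprod.associator _ _ _)

lemma fin_biprod {X Y : C} (hX : X ∈ finCoprodShifts S) (hY : Y ∈ finCoprodShifts S) :
    (X ⊞ Y) ∈ finCoprodShifts S := by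
  obtain ⟨k, obj, s, hobj, ⟨e⟩⟩ := hX
  exact fin_iso (fin_biprod_aux Y hY k obj s hobj) (biprod.mapIso e (Iso.refl Y))

lemma fin_shift {X : C} (hX : X ∈ finCoprodShifts S) (n : ℤ) :
    X⟦n⟧ ∈ finCoprodShifts S := by
  obtain ⟨k, obj, s, hobj, ⟨e⟩⟩ := hX
  refine ⟨k, obj, fun i => s i + n, hobj, ⟨?_⟩⟩
  refine ((shiftFunctor C n).mapIso e).trans ?_
  refine ((shiftFunctor C n).mapBiproduct _).trans ?_
  exact biproduct.mapIso fun i => ((shiftFunctorAdd' C (s i) n _ rfl).app (obj i)).symm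

lemma add_of_fin {X : C} (h : X ∈ finCoprodShifts S) : X ∈ addSet S :=
  ⟨X, h, retract_self X⟩

lemma add_retract {X Y : C} (h : IsRetract X Y) (hY : Y ∈ addSet S) : X ∈ addSet S := by
  obtain ⟨F, hF, hr⟩ := hY
  exact ⟨F, hF, retract_trans h hr⟩

lemma add_iso {X Y : C} (e : X ≅ Y) (hY : Y ∈ addSet S) : X ∈ addSet S :=
  add_retract (retract_of_iso e) hY

lemma add_zero {X : C} (h : IsZero X) : X ∈ addSet S := add_of_fin (fin_zero h)

lemma add_shift {X : C} (hX : X ∈ addSet S) (n : ℤ) : X⟦n⟧ ∈ addSet S := by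
  obtain ⟨F, hF, hr⟩ := hX
  exact ⟨F⟦n⟧, fin_shift hF n, retract_shift hr n⟩

lemma add_biprod {X Y : C} (hX : X ∈ addSet S) (hY : Y ∈ addSet S) :
    (X ⊞ Y) ∈ addSet S := by
  obtain ⟨F, hF, hr⟩ := hX
  obtain ⟨F', hF', hr'⟩ := hY
  exact ⟨F ⊞ F', fin_biprod hF hF', retract_biprod hr hr'⟩

variable (G : C)

lemma level_succ_as_add (n : ℕ) : ∃ S : Set C, levelSet G (n+1) = addSet S := by
  cases n with
  | zero => exact ⟨{G}, rfl⟩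
  | succ n => exact ⟨_, rfl⟩

lemma level_retract {X Y : C} {n : ℕ} (h : IsRetract X Y) (hY : Y ∈ levelSet G (n+1)) :
    X ∈ levelSet G (n+1) := by
  obtain ⟨S, hS⟩ := level_succ_as_add G n
  rw [hS] at hY ⊢
  exact add_retract h hY

lemma level_iso {X Y : C} {n : ℕ} (e : X ≅ Y) (hY : Y ∈ levelSet G (n+1)) :
    X ∈ levelSet G (n+1) :=
  level_retract G (retract_of_iso e) hY

lemma level_zero {X : C} (h : IsZero X) (n : ℕ) : X ∈ levelSet G (n+1) := by
  obtain ⟨S, hS⟩ := level_succ_as_add G n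
  rw [hS]
  exact add_zero h

lemma level_shift {X : C} {n : ℕ} (hX : X ∈ levelSet G (n+1)) (k : ℤ) :
    X⟦k⟧ ∈ levelSet G (n+1) := by
  obtain ⟨S, hS⟩ := level_succ_as_add G n
  rw [hS] at hX ⊢
  exact add_shift hX k

lemma level_biprod {X Y : C} {n : ℕ} (hX : X ∈ levelSet G (n+1)) (hY : Y ∈ levelSet G (n+1)) :
    (X ⊞ Y) ∈ levelSet G (n+1) := by
  obtain ⟨S, hS⟩ := level_succ_as_add G n
  rw [hS] at hX hY ⊢
  exact add_biprod hX hY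

end Aux2
end RouquierApprox
namespace RouquierApprox
section Aux3
variable {C : Type*} [Category C] [Preadditive C] [HasZeroObject C] [HasShift C ℤ]
  [∀ (n : ℤ), (shiftFunctor C n).Additive] [Pretriangulated C]
variable (t : TStructure C)

/-- precomposition with `u` is bijective on maps into any `Z ∈ t.ge m`. -/
def BijOn (m : ℤ) {X Y : C} (u : X ⟶ Y) : Prop :=
  ∀ Z : C, t.ge m Z → Function.Bijective (fun α : Y ⟶ Z => u ≫ α)

lemma bij_shift {X Y : C} (u : X ⟶ Y) (k : ℤ) (Z : C)
    (h : Function.Bijective (fun α : Y ⟶ Z⟦-k⟧ => u ≫ α)) :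
    Function.Bijective (fun α : Y⟦k⟧ ⟶ Z => u⟦k⟧' ≫ α) := by
  let adj := (shiftEquiv C k).toAdjunction
  have key : (fun α : Y⟦k⟧ ⟶ Z => u⟦k⟧' ≫ α) =
      (adj.homEquiv X Z).symm ∘ (fun β : Y ⟶ Z⟦-k⟧ => u ≫ β) ∘ (adj.homEquiv Y Z) := by
    funext α
    show _ = (adj.homEquiv X Z).symm (u ≫ adj.homEquiv Y Z α)
    exact (adj.homEquiv X Z).eq_symm_apply.mpr (Adjunction.homEquiv_naturality_left adj u α)
  rw [key]
  exact ((adj.homEquiv X Z).symm.bijective.comp h).comp (adj.homEquiv Y Z).bijective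

lemma bij_comp {X Y W Z : C} (u : X ⟶ Y) (v : Y ⟶ W)
    (hu : Function.Bijective (fun α : Y ⟶ Z => u ≫ α))
    (hv : Function.Bijective (fun α : W ⟶ Z => v ≫ α)) :
    Function.Bijective (fun α : W ⟶ Z => (u ≫ v) ≫ α) := by
  have : (fun α : W ⟶ Z => (u ≫ v) ≫ α) =
      (fun α : Y ⟶ Z => u ≫ α) ∘ (fun α : W ⟶ Z => v ≫ α) := by
    funext α; simp
  rw [this]
  exact hu.comp hv

lemma bij_iso {X Y Z : C} (e : X ≅ Y) :
    Function.Bijective (fun α : Y ⟶ Z => e.hom ≫ α) := by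
  constructor
  · intro a b hab
    simpa using congrArg (fun x => e.inv ≫ x) hab
  · intro b
    exact ⟨e.inv ≫ b, by simp⟩

lemma bij_proj {B₁ B₂ Z : C} (m : ℤ) (h₁ : t.le (m-1) B₁) (hZ : t.ge m Z) :
    Function.Bijective (fun α : B₂ ⟶ Z => (biprod.snd : B₁ ⊞ B₂ ⟶ B₂) ≫ α) := by
  constructor
  · intro a b hab
    simpa using congrArg (fun x => (biprod.inr : B₂ ⟶ B₁ ⊞ B₂) ≫ x) hab
  · intro β
    refine ⟨biprod.inr ≫ β, ?_⟩
    refine biprod.hom_ext' _ _ ?_ ?_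
    · simp only [biprod.inl_snd_assoc, zero_comp]
      exact (tzero' t _ (m-1) m (by omega) h₁ hZ).symm
    · simp

lemma bij_biproduct_map {k : ℕ} {f f' : Fin k → C} (u : ∀ j, f j ⟶ f' j) (Z : C)
    (h : ∀ j, Function.Bijective (fun α : f' j ⟶ Z => u j ≫ α)) :
    Function.Bijective (fun α : (⨁ f') ⟶ Z => biproduct.map u ≫ α) := by
  constructor
  · intro a b hab
    refine biproduct.hom_ext' _ _ (fun j => (h j).1 ?_)
    simp only [← biproduct.ι_map_assoc]
    exact congrArg (fun x => biproduct.ι f j ≫ x) hab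
  · intro β
    choose γ hγ using fun j => (h j).2 (biproduct.ι f j ≫ β)
    refine ⟨biproduct.desc γ, biproduct.hom_ext' _ _ (fun j => ?_)⟩
    simp only [biproduct.ι_map_assoc, biproduct.ι_desc]
    exact hγ j

variable {G : C} {g : ℤ} (hGle : t.le g G) (hGge : t.ge (-g) G)

include hGle hGge in
lemma finsplit (s : ℤ) : ∀ {F : C}, F ∈ finCoprodShifts ({G} : Set C) →
    ∃ (B₁ B₂ : C) (_ : F ≅ B₁ ⊞ B₂),
      t.le (2*g+s-1) B₁ ∧ t.ge s B₂ ∧ B₂ ∈ finCoprodShifts ({G} : Set C) := by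
  suffices h : ∀ (k : ℕ) (obj : Fin k → C) (sh : Fin k → ℤ), (∀ i, obj i ∈ ({G} : Set C)) →
      ∃ (B₁ B₂ : C) (_ : (⨁ fun i => (obj i)⟦sh i⟧) ≅ B₁ ⊞ B₂),
      t.le (2*g+s-1) B₁ ∧ t.ge s B₂ ∧ B₂ ∈ finCoprodShifts ({G} : Set C) by
    rintro F ⟨k, obj, sh, hobj, ⟨e⟩⟩
    obtain ⟨B₁, B₂, e', h₁, h₂, h₃⟩ := h k obj sh hobj
    exact ⟨B₁, B₂, e.trans e', h₁, h₂, h₃⟩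
  intro k
  induction k with
  | zero =>
    intro obj sh _
    have hz := isZero_biprod_finZero (fun i : Fin 0 => (obj i)⟦sh i⟧)
    exact ⟨_, _, (biprodZeroRight hz).symm, isZero_le t _ hz, isZero_ge t _ hz, fin_zero hz⟩
  | succ k ih =>
    intro obj sh hobj
    obtain ⟨B₁, B₂, e, h₁, h₂, h₃⟩ :=
      ih (fun i => obj i.succ) (fun i => sh i.succ) (fun i => hobj i.succ)
    have hobj0 : obj 0 = G := hobj 0
    have e0 : (⨁ fun i => (obj i)⟦sh i⟧) ≅ (obj 0)⟦sh 0⟧ ⊞ (B₁ ⊞ B₂) :=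
      (biprodFinSuccIso _).trans (biprod.mapIso (Iso.refl _) e)
    rcases le_or_gt (sh 0) (-g - s) with hc | hc
    · -- high part: (obj 0)⟦sh 0⟧ ∈ GE s
      have hge : t.ge s ((obj 0)⟦sh 0⟧) := by
        rw [hobj0]
        exact t.ge_antitone (by omega) _ (t.ge_shift (-g) (sh 0) (-g - sh 0) (by omega) G hGge)
      refine ⟨B₁, (obj 0)⟦sh 0⟧ ⊞ B₂,
        e0.trans (((biprod.associator _ _ _).symm).trans
          ((biprod.mapIso (biprod.braiding _ _) (Iso.refl _)).trans (biprod.associator _ _ _))),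
        h₁, ge_biprod t s hge h₂, ?_⟩
      rw [hobj0]
      exact fin_cons (Set.mem_singleton G) h₃ (sh 0)
    · -- low part: (obj 0)⟦sh 0⟧ ∈ LE (2g+s-1)
      have hle : t.le (2*g+s-1) ((obj 0)⟦sh 0⟧) := by
        rw [hobj0]
        exact t.le_monotone (by omega) _ (t.le_shift g (sh 0) (g - sh 0) (by omega) G hGle)
      exact ⟨(obj 0)⟦sh 0⟧ ⊞ B₁, B₂, e0.trans (biprod.associator _ _ _).symm,
        le_biprod t _ hle h₁, h₂, h₃⟩

end Aux3
end RouquierApprox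
namespace RouquierApprox
section Aux4
variable {C : Type*} [Category C] [Preadditive C] [HasZeroObject C] [HasShift C ℤ]
  [∀ (n : ℤ), (shiftFunctor C n).Additive] [Pretriangulated C]

/-- levels without retracts -/
def pureLevel (G : C) : ℕ → Set C
  | 0 => {X | IsZero X}
  | 1 => finCoprodShifts {G}
  | (n+2) => finCoprodShifts (coneSet (pureLevel G (n+1)) (finCoprodShifts {G}))

lemma fin_mono {S S' : Set C} (h : S ⊆ S') :
    finCoprodShifts S ⊆ finCoprodShifts S' := by
  rintro X ⟨k, obj, s, hobj, he⟩
  exact ⟨k, obj, s, fun i => h (hobj i), he⟩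

lemma cone_mono {S S' T T' : Set C} (hS : S ⊆ S') (hT : T ⊆ T') :
    coneSet S T ⊆ coneSet S' T' := by
  rintro Z ⟨A, B, f, gg, hh, hA, hB, mem⟩
  exact ⟨A, B, f, gg, hh, hS hA, hT hB, mem⟩

lemma pure_subset_level (G : C) : ∀ n : ℕ, pureLevel G (n+1) ⊆ levelSet G (n+1) := by
  intro n
  induction n with
  | zero => exact fun X hX => add_of_fin hX
  | succ n ih =>
    intro X hX
    exact add_of_fin (fin_mono (cone_mono ih (fun B hB => add_of_fin hB)) hX)

lemma retract_cone {A B A' B' Z : C} (f : A ⟶ B) (gg : B ⟶ Z) (hh : Z ⟶ A⟦(1:ℤ)⟧)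
    (mem : Triangle.mk f gg hh ∈ distTriang C)
    (hA : IsRetract A A') (hB : IsRetract B B') :
    ∃ (f' : A' ⟶ B') (Z' : C) (g' : B' ⟶ Z') (h' : Z' ⟶ A'⟦(1:ℤ)⟧),
      (Triangle.mk f' g' h' ∈ distTriang C) ∧ IsRetract Z Z' := by
  obtain ⟨iA, rA, hiA⟩ := hA
  obtain ⟨iB, rB, hiB⟩ := hB
  let f' : A' ⟶ B' := rA ≫ f ≫ iB
  obtain ⟨Z', g', h', mem'⟩ := distinguished_cocone_triangle f'
  obtain ⟨c, hc₁, hc₂⟩ : ∃ c : Z ⟶ Z', gg ≫ c = iB ≫ g' ∧ hh ≫ iA⟦(1:ℤ)⟧' = c ≫ h' :=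
    complete_distinguished_triangle_morphism
    (Triangle.mk f gg hh) (Triangle.mk f' g' h') mem mem' iA iB
    (by change f ≫ iB = iA ≫ (rA ≫ f ≫ iB); rw [← Category.assoc, ← Category.assoc, hiA, Category.id_comp])
  obtain ⟨c', hc₁', hc₂'⟩ : ∃ c' : Z' ⟶ Z, g' ≫ c' = rB ≫ gg ∧ h' ≫ rA⟦(1:ℤ)⟧' = c' ≫ hh :=
    complete_distinguished_triangle_morphism
    (Triangle.mk f' g' h') (Triangle.mk f gg hh) mem' mem rA rB
    (by change (rA ≫ f ≫ iB) ≫ rB = rA ≫ f; rw [Category.assoc, Category.assoc, hiB, Category.comp_id])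
  have hcomm₂ : gg ≫ (c ≫ c') = 𝟙 B ≫ gg := by
    rw [← Category.assoc, hc₁, Category.assoc, hc₁', ← Category.assoc, hiB]
  have hcomm₃ : (c ≫ c') ≫ hh = hh ≫ (𝟙 A)⟦(1:ℤ)⟧' := by
    rw [Category.assoc, ← hc₂', ← Category.assoc, ← hc₂, Category.assoc,
      ← Functor.map_comp, hiA]
  let φ : Triangle.mk f gg hh ⟶ Triangle.mk f gg hh :=
    { hom₁ := 𝟙 A
      hom₂ := 𝟙 B
      hom₃ := c ≫ c'
      comm₁ := by exact (Category.comp_id f).trans (Category.id_comp f).symm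
      comm₂ := by exact hcomm₂
      comm₃ := by exact hcomm₃.symm }
  have : IsIso φ.hom₃ := isIso₃_of_isIso₁₂ φ mem mem
    (by exact IsIso.id A) (by exact IsIso.id B)
  have hIso : IsIso (c ≫ c') := this
  exact ⟨f', Z', g', h', mem', ⟨c, c' ≫ inv (c ≫ c'), by
    rw [← Category.assoc, IsIso.hom_inv_id]⟩⟩

lemma retract_biproduct {k : ℕ} {f f' : Fin k → C} (h : ∀ j, IsRetract (f j) (f' j)) :
    IsRetract (⨁ f) (⨁ f') := by
  choose i r hir using h
  refine ⟨biproduct.map i, biproduct.map r, ?_⟩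
  ext j
  simp [hir]

lemma pure_retract (G : C) : ∀ (n : ℕ) {q : C}, q ∈ levelSet G (n+1) →
    ∃ Q ∈ pureLevel G (n+1), IsRetract q Q := by
  intro n
  induction n with
  | zero =>
    rintro q ⟨F, hF, hr⟩
    exact ⟨F, hF, hr⟩
  | succ n ih =>
    rintro q ⟨F, hF, hr⟩
    obtain ⟨k, Zobj, sh, hZ, ⟨e⟩⟩ := hF
    have key : ∀ j : Fin k, ∃ Z' ∈ coneSet (pureLevel G (n+1)) (finCoprodShifts ({G} : Set C)),
        IsRetract (Zobj j) Z' := by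
      intro j
      obtain ⟨A, B, f, gg, hh, hA, hB, mem⟩ := hZ j
      obtain ⟨A', hA', hrA⟩ := ih hA
      obtain ⟨B', hB', hrB⟩ := hB
      obtain ⟨f', Z', g', h', mem', hrZ⟩ := retract_cone f gg hh mem hrA hrB
      exact ⟨Z', ⟨A', B', f', g', h', hA', hB', mem'⟩, hrZ⟩
    choose Z' hZ' hrZ' using key
    refine ⟨⨁ fun j => (Z' j)⟦sh j⟧, ⟨k, Z', sh, hZ', ⟨Iso.refl _⟩⟩, ?_⟩
    refine retract_trans hr (retract_trans (retract_of_iso e) ?_)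
    exact retract_biproduct (fun j => retract_shift (hrZ' j) (sh j))

lemma ge_biproduct (t : TStructure C) (a : ℤ) :
    ∀ {k : ℕ} (f : Fin k → C), (∀ j, t.ge a (f j)) → t.ge a (⨁ f) := by
  intro k
  induction k with
  | zero => exact fun f _ => isZero_ge t a (isZero_biprod_finZero f)
  | succ k ih =>
    intro f h
    exact (t.ge a).prop_of_iso (biprodFinSuccIso f).symm
      (ge_biprod t a (h 0) (ih _ (fun j => h j.succ)))

lemma level_biproduct (G : C) (n : ℕ) :
    ∀ {k : ℕ} (f : Fin k → C), (∀ j, f j ∈ levelSet G (n+1)) → (⨁ f) ∈ levelSet G (n+1) := by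
  intro k
  induction k with
  | zero => exact fun f _ => level_zero G (isZero_biprod_finZero f) n
  | succ k ih =>
    intro f h
    exact level_iso G (biprodFinSuccIso f)
      (level_biprod G (h 0) (ih _ (fun j => h j.succ)))

end Aux4
end RouquierApprox
namespace RouquierApprox
section Aux5
variable {C : Type*} [Category C] [Preadditive C] [HasZeroObject C] [HasShift C ℤ]
  [∀ (n : ℤ), (shiftFunctor C n).Additive] [Pretriangulated C]
variable (t : TStructure C) {G : C} {g : ℤ}

include t in
lemma pure_approx (hg1 : 1 ≤ g) (hGle : t.le g G) (hGge : t.ge (-g) G) :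
    ∀ (n : ℕ) (m : ℤ) {Q : C}, Q ∈ pureLevel G (n+1) →
    ∃ (Q₂ : C) (v : Q ⟶ Q₂), Q₂ ∈ levelSet G (n+1) ∧
      t.ge (m - 2*g - (n:ℤ)*(2*g+1)) Q₂ ∧ BijOn t m v := by
  intro n
  induction n with
  | zero =>
    intro m Q hQ
    obtain ⟨B₁, B₂, eQ, h₁, h₂, h₃⟩ := finsplit t hGle hGge (m - 2*g) hQ
    have h₁' : t.le (m-1) B₁ := by
      have he : 2*g+(m-2*g)-1 = m-1 := by ring
      rwa [he] at h₁
    refine ⟨B₂, eQ.hom ≫ biprod.snd, add_of_fin h₃, ?_, ?_⟩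
    · have he : m - 2*g - ((0:ℕ):ℤ)*(2*g+1) = m - 2*g := by push_cast; ring
      rwa [he]
    · intro Z hZ
      exact bij_comp _ _ (bij_iso eQ) (bij_proj t m h₁' hZ)
  | succ n ih =>
    intro m Q hQ
    obtain ⟨k, Zobj, sh, hZmem, ⟨e⟩⟩ := hQ
    have key : ∀ j : Fin k, ∃ (Z₂ : C) (v : Zobj j ⟶ Z₂), Z₂ ∈ levelSet G (n+1+1) ∧
        t.ge ((m + sh j) - 2*g - ((n:ℤ)+1)*(2*g+1)) Z₂ ∧ BijOn t (m + sh j) v := by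
      intro j
      obtain ⟨A, B, f, gg, hh, hA, hB, mem⟩ := hZmem j
      set mj := m + sh j with hmj
      -- split B at threshold s := mj - 2*g
      obtain ⟨B₁, B₂, eB, hB₁le, hB₂ge, hB₂fin⟩ := finsplit t hGle hGge (mj - 2*g) hB
      have hB₁le' : t.le (mj - 1) B₁ := by
        have he : 2*g+(mj-2*g)-1 = mj-1 := by ring
        rwa [he] at hB₁le
      set pr : B ⟶ B₂ := eB.hom ≫ biprod.snd with hpr
      have prBij : ∀ Z : C, t.ge mj Z →
          Function.Bijective (fun α : B₂ ⟶ Z => pr ≫ α) := by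
        intro Z hZ'
        exact bij_comp _ _ (bij_iso eB) (bij_proj t mj hB₁le' hZ')
      -- approximate A
      obtain ⟨A₂, vA, hA₂lvl, hA₂ge, hAbij⟩ := ih (mj - 2*g) hA
      -- the map f₂ : A₂ ⟶ B₂
      obtain ⟨f₂, hf₂⟩ := (hAbij B₂ hB₂ge).2 (f ≫ pr)
      simp only [] at hf₂
      obtain ⟨Z₂, g₂, h₂, mem₂⟩ := distinguished_cocone_triangle f₂
      obtain ⟨v, hv₁, hv₂⟩ : ∃ v : Zobj j ⟶ Z₂,
          gg ≫ v = pr ≫ g₂ ∧ hh ≫ vA⟦(1:ℤ)⟧' = v ≫ h₂ :=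
        complete_distinguished_triangle_morphism
          (Triangle.mk f gg hh) (Triangle.mk f₂ g₂ h₂) mem mem₂ vA pr
          (by exact hf₂.symm)
      refine ⟨Z₂, v, ?_, ?_, ?_⟩
      · -- level membership
        show Z₂ ∈ addSet (coneSet (levelSet G (n+1)) (addSet ({G} : Set C)))
        exact add_of_fin (fin_self ⟨A₂, B₂, f₂, g₂, h₂, hA₂lvl, add_of_fin hB₂fin, mem₂⟩)
      · -- GE bound
        refine ge₂ t _ (rot_of_distTriang _ mem₂) _ ?_ ?_
        · -- B₂
          refine t.ge_antitone ?_ _ hB₂ge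
          have hn : (0:ℤ) ≤ (n:ℤ) := Int.natCast_nonneg n
          nlinarith
        · -- A₂⟦1⟧
          refine t.ge_shift (mj - 2*g - 2*g - (n:ℤ)*(2*g+1)) 1
            (mj - 2*g - ((n:ℤ)+1)*(2*g+1)) (by ring) A₂ ?_
          have he : mj - 2*g - 2*g - (n:ℤ)*(2*g+1) = (mj - 2*g) - 2*g - (n:ℤ)*(2*g+1) := by
            ring
          rwa [he]
      · -- BijOn
        intro Z hZmj
        have hZ1 : t.ge (mj+1) (Z⟦(-1:ℤ)⟧) := t.ge_shift mj (-1) (mj+1) (by omega) Z hZmj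
        have hZ1' : t.ge mj (Z⟦(-1:ℤ)⟧) := t.ge_antitone (by omega) _ hZ1
        have hZmA : t.ge (mj - 2*g) Z := t.ge_antitone (by omega) _ hZmj
        have hZ1mA : t.ge (mj - 2*g) (Z⟦(-1:ℤ)⟧) := t.ge_antitone (by omega) _ hZ1
        have hA0 := hAbij Z hZmA
        have hA1 := bij_shift vA 1 Z (hAbij (Z⟦(-1:ℤ)⟧) hZ1mA)
        have hP0 := prBij Z hZmj
        have hP1 := bij_shift pr 1 Z (prBij (Z⟦(-1:ℤ)⟧) hZ1')
        constructor
        · -- injectivity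
          have hker : ∀ x : Z₂ ⟶ Z, v ≫ x = 0 → x = 0 := by
            intro x hx
            have h1 : pr ≫ (g₂ ≫ x) = pr ≫ 0 := by
              rw [comp_zero, ← Category.assoc, ← hv₁, Category.assoc, hx, comp_zero]
            have h2 : g₂ ≫ x = 0 := hP0.1 h1
            obtain ⟨y, hy⟩ : ∃ y : A₂⟦(1:ℤ)⟧ ⟶ Z, x = h₂ ≫ y :=
              Triangle.yoneda_exact₃ _ mem₂ x h2
            have h3 : hh ≫ (vA⟦(1:ℤ)⟧' ≫ y) = 0 := by
              rw [← Category.assoc, hv₂, Category.assoc, ← hy, hx]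
            obtain ⟨z, hz⟩ : ∃ z : B⟦(1:ℤ)⟧ ⟶ Z,
                vA⟦(1:ℤ)⟧' ≫ y = (-(f⟦(1:ℤ)⟧')) ≫ z :=
              Triangle.yoneda_exact₃ _ (rot_of_distTriang _ mem)
                (vA⟦(1:ℤ)⟧' ≫ y) (by exact h3)
            obtain ⟨w2, hw2⟩ := hP1.2 z
            simp only [] at hw2
            have h4 : vA⟦(1:ℤ)⟧' ≫ y = vA⟦(1:ℤ)⟧' ≫ (-(f₂⟦(1:ℤ)⟧' ≫ w2)) := by
              rw [hz, ← hw2]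
              rw [Preadditive.comp_neg, Preadditive.neg_comp, neg_inj, ← Category.assoc, ← Functor.map_comp,
                ← hf₂, Functor.map_comp, Category.assoc]
            have h5 : y = -(f₂⟦(1:ℤ)⟧' ≫ w2) := hA1.1 h4
            rw [hy, h5, Preadditive.comp_neg, ← Category.assoc]
            have h6 : h₂ ≫ f₂⟦(1:ℤ)⟧' = 0 := comp_distTriang_mor_zero₃₁ _ mem₂
            rw [h6, zero_comp, neg_zero]
          intro x y hxy
          have : v ≫ (x - y) = 0 := by
            rw [Preadditive.comp_sub]
            simp only [] at hxy
            rw [hxy, sub_self]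
          have := hker _ this
          rwa [sub_eq_zero] at this
        · -- surjectivity
          intro x
          obtain ⟨y₂, hy₂⟩ := hP0.2 (gg ≫ x)
          simp only [] at hy₂
          have hfg : f ≫ gg = 0 := comp_distTriang_mor_zero₁₂ _ mem
          have h1 : vA ≫ (f₂ ≫ y₂) = vA ≫ 0 := by
            rw [comp_zero, ← Category.assoc, hf₂, Category.assoc, hy₂, ← Category.assoc,
              hfg, zero_comp]
          have h2 : f₂ ≫ y₂ = 0 := hA0.1 h1
          obtain ⟨y₃, hy₃⟩ : ∃ y₃ : Z₂ ⟶ Z, y₂ = g₂ ≫ y₃ :=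
            Triangle.yoneda_exact₂ _ mem₂ y₂ h2
          have h3 : gg ≫ (x - v ≫ y₃) = 0 := by
            rw [Preadditive.comp_sub, ← Category.assoc, hv₁, Category.assoc, ← hy₃, hy₂,
              sub_self]
          obtain ⟨w, hw⟩ : ∃ w : A⟦(1:ℤ)⟧ ⟶ Z, x - v ≫ y₃ = hh ≫ w :=
            Triangle.yoneda_exact₃ _ mem (x - v ≫ y₃) h3
          obtain ⟨w₂, hw₂⟩ := hA1.2 w
          simp only [] at hw₂
          refine ⟨y₃ + h₂ ≫ w₂, ?_⟩
          show v ≫ (y₃ + h₂ ≫ w₂) = x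
          rw [Preadditive.comp_add, ← Category.assoc v h₂ w₂, ← hv₂, Category.assoc, hw₂,
            ← hw]
          abel
    choose Z₂ vj hlvl hge hbij using key
    refine ⟨⨁ fun j => (Z₂ j)⟦sh j⟧, e.hom ≫ biproduct.map (fun j => (vj j)⟦sh j⟧'), ?_, ?_, ?_⟩
    · exact level_biproduct G (n+1) _ (fun j => level_shift G (hlvl j) (sh j))
    · refine ge_biproduct t _ _ (fun j => ?_)
      refine t.ge_shift ((m + sh j) - 2*g - ((n:ℤ)+1)*(2*g+1)) (sh j)
        (m - 2*g - (((n+1:ℕ)):ℤ)*(2*g+1)) (by push_cast; ring) _ (hge j)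
    · intro Z hZ
      refine bij_comp _ _ (bij_iso e) (bij_biproduct_map _ Z (fun j => ?_))
      refine bij_shift (vj j) (sh j) Z ?_
      exact (hbij j) (Z⟦-sh j⟧) (t.ge_shift m (-(sh j)) (m + sh j) (by ring) Z hZ)
end Aux5
end RouquierApprox

open CategoryTheory Limits Pretriangulated Triangulated RouquierApprox

open ZeroObject

/-- Proposition 3.6. Let `T` be a triangulated category with a
bounded t-structure, `G` an object and `d > 0`. Suppose `P` is a collection of
objects which approximates objects of `T`: for each object `E` and integer `a`
there is a map `p ⟶ E` with `p ∈ P` which is an isomorphism in degrees `≥ a`.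
Then `T = ⟨G⟩_d` if and only if `P ⊆ ⟨G⟩_d`. -/
theorem statement5 {C : Type*} [Category C] [Preadditive C] [HasZeroObject C] [HasShift C ℤ]
    [∀ (n : ℤ), (shiftFunctor C n).Additive] [Pretriangulated C]
    (t : TStructure C) (hb : IsBoundedTStructure t)
    (G : C) (d : ℕ) (hd : 0 < d) (P : Set C)
    (happrox : ∀ (E : C) (a : ℤ), ∃ p ∈ P, ∃ φ : p ⟶ E, IsIsoInDegreesGE t a φ) :
    levelSet G d = Set.univ ↔ P ⊆ levelSet G d := by
  constructor
  · intro h p _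
    rw [h]
    exact Set.mem_univ p
  · intro hP
    apply Set.eq_univ_of_forall
    intro E
    obtain ⟨n', rfl⟩ : ∃ n', d = n'+1 := ⟨d-1, by omega⟩
    obtain ⟨g, hg0, hGle, hGge⟩ := hb G
    obtain ⟨nE, hnE0, hEle, hEge⟩ := hb E
    set m : ℤ := -nE with hm
    set b : ℤ := m - 2*g - (n':ℤ)*(2*g+1) with hbdef
    set a₀ : ℤ := min m b with ha₀
    have ha₀m : a₀ ≤ m := min_le_left m b
    have ha₀b : a₀ ≤ b := min_le_right m b
    obtain ⟨p, hpP, φ, hφ⟩ := happrox E a₀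
    have hp : p ∈ levelSet G (n'+1) := hP hpP
    obtain ⟨Q, hQpure, i, r, hir⟩ := pure_retract G n' hp
    obtain ⟨Q₂, v, hQ₂lvl, hQ₂ge, hBij⟩ :=
      pure_approx t (by omega) hGle hGge n' m hQpure
    set u : p ⟶ Q₂ := i ≫ v with hu
    have husurj : ∀ Z : C, t.ge m Z → ∀ x : p ⟶ Z, ∃ α : Q₂ ⟶ Z, u ≫ α = x := by
      intro Z hZ x
      obtain ⟨α, hα⟩ := (hBij Z hZ).2 (r ≫ x)
      have hα' : v ≫ α = r ≫ x := hα
      refine ⟨α, ?_⟩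
      show (i ≫ v) ≫ α = x
      rw [Category.assoc, hα', ← Category.assoc, hir, Category.id_comp]
    obtain ⟨W, R', hW, hR', ι, π, δ, mem⟩ := t.exists_triangle p (a₀ - 1) a₀ (by omega)
    have hEa₀ : t.ge a₀ E := t.ge_antitone ha₀m E hEge
    have hι : ι ≫ φ = 0 := tzero' t _ (a₀-1) a₀ (by omega) hW hEa₀
    obtain ⟨gm, hgm⟩ : ∃ gm : R' ⟶ E, φ = π ≫ gm := Triangle.yoneda_exact₂ _ mem φ hι
    have hIso : IsIso gm :=
      hφ ⟨W, R', hW, hR', ι, π, δ, mem⟩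
        ⟨0, E, isZero_le t _ (isZero_zero C), hEa₀, 0, 𝟙 E, 0, contractible_distinguished₁ E⟩
        gm (by dsimp; rw [Category.comp_id]; exact hgm.symm)
    let eR : R' ≅ E := @asIso _ _ _ _ gm hIso
    have hR'm : t.ge m R' := (t.ge m).prop_of_iso eR.symm hEge
    obtain ⟨r₂, hr₂⟩ := husurj R' hR'm π
    have hWQ : ι ≫ u = 0 := tzero' t _ (a₀-1) b (by omega) hW hQ₂ge
    obtain ⟨β, hβ⟩ : ∃ β : R' ⟶ Q₂, u = π ≫ β := Triangle.yoneda_exact₂ _ mem u hWQ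
    have hπ0 : π ≫ (β ≫ r₂ - 𝟙 R') = 0 := by
      rw [Preadditive.comp_sub, ← Category.assoc, ← hβ, hr₂, Category.comp_id, sub_self]
    obtain ⟨y, hy⟩ : ∃ y : W⟦(1:ℤ)⟧ ⟶ R', β ≫ r₂ - 𝟙 R' = δ ≫ y :=
      Triangle.yoneda_exact₃ _ mem _ hπ0
    have hy0 : y = 0 := tzero' t y (a₀-2) m (by omega)
      (t.le_shift (a₀-1) 1 (a₀-2) (by omega) W hW) hR'm
    have hβr : β ≫ r₂ = 𝟙 R' := by
      have : β ≫ r₂ - 𝟙 R' = 0 := by rw [hy, hy0, comp_zero]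
      exact sub_eq_zero.mp this
    have hret : IsRetract E Q₂ := ⟨eR.inv ≫ β, r₂ ≫ eR.hom, by
      rw [Category.assoc, ← Category.assoc β, hβr, Category.id_comp, Iso.inv_hom_id]⟩
    exact level_retract G hret hQ₂lvl
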